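/- Let G₁ = (V₁, E₁) and G₂ = (V₂, E₂) be finite graphs, f : V₂ → V₁ a function, and θ : ℓ∞(V₁) → ℓ∞(V₂) the induced *-homomorphism. Equip each ℓ∞(V_k) with the inner product making {χ_v} orthonormal, and let θ† : ℓ∞(V₂) → ℓ∞(V₁) be the adjoint, so θ†(χ_v) = χ_{f(v)}. Then f is a graph homomorphism from G₂ to G₁ if and only if (θ† ⊗ θ†)(Ann(S₂^⊥)) ⊆ Ann(S₁^⊥), where S_k^⊥ := span{|v⟩⟨w| : (v,w) ∉ E_k}. -/

import Mathlib

open TensorProduct Matrix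

noncomputable def ev2 {V : Type*} (v w : V) : (V → ℂ) ⊗[ℂ] (V → ℂ) →ₗ[ℂ] ℂ :=
  TensorProduct.lift ((LinearMap.mul ℂ ℂ).compl₁₂ (LinearMap.proj v) (LinearMap.proj w))

@[simp] lemma ev2_tmul {V : Type*} (v w : V) (x y : V → ℂ) :
    ev2 v w (x ⊗ₜ y) = x v * y w := by simp [ev2]

/-- The map `Φ` sending `x ⊗ y ∈ ℓ∞(V) ⊗ ℓ∞(V)` to the operator `T ↦ x T y` on
`B(ℓ²(V))`, with `ℓ∞(V)` acting by pointwise (diagonal) multiplication. -/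
noncomputable def Phi {V : Type*} [Fintype V] [DecidableEq V] :
    (V → ℂ) ⊗[ℂ] (V → ℂ) →ₗ[ℂ] Matrix V V ℂ →ₗ[ℂ] Matrix V V ℂ :=
  TensorProduct.lift
  { toFun := fun x =>
      { toFun := fun y =>
          (LinearMap.mulLeft ℂ (Matrix.diagonal x)).comp
            (LinearMap.mulRight ℂ (Matrix.diagonal y))
        map_add' := fun y₁ y₂ => by
          ext T
          simp [Matrix.diagonal_add, Matrix.mul_add]
          ring
        map_smul' := fun c y => by
          ext T
          simp [Matrix.diagonal_smul, Matrix.mul_smul] }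
    map_add' := fun x₁ x₂ => by
      ext y T
      simp [Matrix.diagonal_add, Matrix.add_mul]
      ring
    map_smul' := fun c x => by
      ext y T
      simp [Matrix.diagonal_smul, smul_mul_assoc] }

lemma Phi_std {V : Type*} [Fintype V] [DecidableEq V] (v w : V)
    (z : (V → ℂ) ⊗[ℂ] (V → ℂ)) :
    Phi z (Matrix.single v w 1) = ev2 v w z • Matrix.single v w 1 := by
  induction z using TensorProduct.induction_on with
  | zero => simp
  | tmul x y =>
    have hPhi : Phi (x ⊗ₜ[ℂ] y) (Matrix.single v w 1) =
        diagonal x * (Matrix.single v w 1 * diagonal y) := rfl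
    rw [hPhi, ev2_tmul]
    ext i j
    simp [Matrix.mul_diagonal, Matrix.diagonal_mul, Matrix.single]
    aesop
  | add z₁ z₂ h₁ h₂ =>
    simp only [map_add, LinearMap.add_apply, h₁, h₂, add_smul]

/-- The quantization `S = span{|v⟩⟨w| : (v,w) ∈ E}` of an edge set `E`. -/
noncomputable def quantization {V : Type*} [Fintype V] [DecidableEq V] (E : Set (V × V)) :
    Submodule ℂ (Matrix V V ℂ) :=
  Submodule.span ℂ {M : Matrix V V ℂ | ∃ p ∈ E, M = Matrix.single p.1 p.2 1}

/-- The annihilator of a subspace `S ⊆ B(ℓ²(V))` inside `ℓ∞(V) ⊗ ℓ∞(V)`. -/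
def Ann {V : Type*} [Fintype V] [DecidableEq V] (S : Submodule ℂ (Matrix V V ℂ)) :
    Set ((V → ℂ) ⊗[ℂ] (V → ℂ)) :=
  {z | ∀ T ∈ S, Phi z T = 0}

lemma mem_Ann_iff {V : Type*} [Fintype V] [DecidableEq V] (E : Set (V × V))
    (z : (V → ℂ) ⊗[ℂ] (V → ℂ)) :
    z ∈ Ann (quantization E) ↔ ∀ p ∈ E, ev2 p.1 p.2 z = 0 := by
  constructor
  · intro h p hp
    have := h (Matrix.single p.1 p.2 1)
      (Submodule.subset_span ⟨p, hp, rfl⟩)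
    rw [Phi_std] at this
    rcases smul_eq_zero.mp this with h' | h'
    · exact h'
    · exfalso
      have := congrFun (congrFun h' p.1) p.2
      simp at this
  · intro h T hT
    refine Submodule.span_induction ?_ ?_ ?_ ?_ hT
    · rintro M ⟨p, hp, rfl⟩
      rw [Phi_std, h p hp, zero_smul]
    · simp
    · intro a b _ _ ha hb; simp [ha, hb]
    · intro c a _ ha; simp [ha]

/-- The adjoint `θ† : ℓ∞(V₂) → ℓ∞(V₁)` of the `*`-homomorphism `θ : g ↦ g ∘ f`
induced by `f : V₂ → V₁`, with respect to the inner products making the indicator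
functions `{χ_v}` orthonormal; it is characterized by `θ†(χ_v) = χ_{f(v)}`. -/
noncomputable def thetaDag {V₁ V₂ : Type*} [Fintype V₂] [DecidableEq V₁] [DecidableEq V₂]
    (f : V₂ → V₁) : (V₂ → ℂ) →ₗ[ℂ] (V₁ → ℂ) :=
  (Pi.basisFun ℂ V₂).constr ℂ (fun v => (Pi.single (f v) 1 : V₁ → ℂ))

lemma thetaDag_apply {V₁ V₂ : Type*} [Fintype V₂] [DecidableEq V₁] [DecidableEq V₂]
    (f : V₂ → V₁) (g : V₂ → ℂ) (v : V₁) :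
    thetaDag f g v = ∑ u : V₂, g u * (if v = f u then 1 else 0) := by
  rw [thetaDag, Module.Basis.constr_apply_fintype]
  simp [Pi.single_apply, Finset.sum_apply]

lemma thetaDag_single {V₁ V₂ : Type*} [Fintype V₂] [DecidableEq V₁] [DecidableEq V₂]
    (f : V₂ → V₁) (u : V₂) :
    thetaDag f (Pi.single u 1) = Pi.single (f u) 1 := by
  ext v
  rw [thetaDag_apply,
    Finset.sum_eq_single u (fun b _ hb => by simp [Pi.single_apply, hb]) (by simp)]
  simp [Pi.single_apply]

lemma ev2_map {V₁ V₂ : Type*} [Fintype V₂] [DecidableEq V₁] [DecidableEq V₂]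
    (f : V₂ → V₁) (v w : V₁) (z : (V₂ → ℂ) ⊗[ℂ] (V₂ → ℂ)) :
    ev2 v w ((TensorProduct.map (thetaDag f) (thetaDag f)) z) =
      ∑ u : V₂, ∑ u' : V₂,
        (if v = f u then 1 else 0) * (if w = f u' then 1 else 0) * ev2 u u' z := by
  induction z using TensorProduct.induction_on with
  | zero => simp
  | tmul x y =>
    simp only [TensorProduct.map_tmul, ev2_tmul, thetaDag_apply]
    rw [Finset.sum_mul_sum]
    congr 1; ext u; congr 1; ext u'; ring
  | add z₁ z₂ h₁ h₂ =>
    simp [h₁, h₂, ← Finset.sum_add_distrib, mul_add]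

/-- `f : V₂ → V₁` is a graph homomorphism from `G₂` to `G₁` iff
`(θ† ⊗ θ†)(Ann(S₂^⊥)) ⊆ Ann(S₁^⊥)`, where `S_k^⊥ = span{|v⟩⟨w| : (v,w) ∉ E_k}`. -/
theorem stmt_2 {V₁ V₂ : Type*} [Fintype V₁] [DecidableEq V₁] [Fintype V₂] [DecidableEq V₂]
    (E₁ : Set (V₁ × V₁)) (E₂ : Set (V₂ × V₂)) (f : V₂ → V₁) :
    (∀ v w : V₂, (v, w) ∈ E₂ → (f v, f w) ∈ E₁) ↔
      (TensorProduct.map (thetaDag f) (thetaDag f)) ''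
          Ann (quantization {p : V₂ × V₂ | p ∉ E₂}) ⊆
        Ann (quantization {p : V₁ × V₁ | p ∉ E₁}) := by
  constructor
  · rintro hf _ ⟨z, hz, rfl⟩
    rw [mem_Ann_iff]
    rintro ⟨v, w⟩ hp
    rw [ev2_map]
    refine Finset.sum_eq_zero fun u _ => Finset.sum_eq_zero fun u' _ => ?_
    by_cases h1 : v = f u
    · by_cases h2 : w = f u'
      · have : (u, u') ∉ E₂ := fun hE => hp (h1 ▸ h2 ▸ hf u u' hE)
        rw [(mem_Ann_iff _ _).mp hz (u, u') this, mul_zero]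
      · simp [h2]
    · simp [h1]
  · intro h v w hvw
    by_contra hne
    have hz : (Pi.single v 1 ⊗ₜ[ℂ] Pi.single w 1 : (V₂ → ℂ) ⊗[ℂ] (V₂ → ℂ)) ∈
        Ann (quantization {p : V₂ × V₂ | p ∉ E₂}) := by
      rw [mem_Ann_iff]
      rintro ⟨a, b⟩ hp
      simp only [ev2_tmul, Pi.single_apply, mul_ite, mul_one, mul_zero]
      by_cases h1 : a = v
      · by_cases h2 : b = w
        · exact absurd (h1 ▸ h2 ▸ hvw) hp
        · simp [h2]
      · simp [h1]
    have hmem := h ⟨_, hz, rfl⟩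
    rw [mem_Ann_iff] at hmem
    have := hmem (f v, f w) hne
    simp [thetaDag_single, Pi.single_apply] at this
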